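/- Let M be a 2×3 integer matrix with columns m₁=(x₁,y₁), m₂=(x₂,y₂), m₃=(x₃,y₃), xᵢ > 0, y₁/x₁ < y₂/x₂ < y₃/x₃, and suppose the 2×2 minors Y₁₂, Y₁₃, Y₂₃ are pairwise relatively prime. Then for every (n₁,n₂) ∈ ℤ² in the closed cone spanned by m₂ and m₃, t((n₁,n₂)|M) = (n₁y₃-n₂x₃)/(Y₂₃Y₁₃) - {Y₁₃⁻¹(n₁y₃-n₂x₃)/Y₂₃} - {Y₂₃⁻¹(n₁y₃-n₂x₃)/Y₁₃} + 1, where Y₁₃⁻¹Y₁₃ ≡ 1 (mod Y₂₃) and Y₂₃⁻¹Y₂₃ ≡ 1 (mod Y₁₃). -/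

import Mathlib

private lemma pop_floor_intCast_div (a b : ℤ) (hb : 0 < b) :
    ⌊(a : ℝ) / (b : ℝ)⌋ = a / b := by
  have hb' : (0:ℝ) < (b:ℝ) := by exact_mod_cast hb
  have he : (b:ℝ) * ((a / b : ℤ) : ℝ) + ((a % b : ℤ) : ℝ) = (a:ℝ) := by
    exact_mod_cast congrArg (Int.cast : ℤ → ℝ) (Int.mul_ediv_add_emod a b)
  have h0 : (0:ℝ) ≤ ((a % b : ℤ) : ℝ) := by exact_mod_cast Int.emod_nonneg a hb.ne'
  have h1 : ((a % b : ℤ) : ℝ) < (b:ℝ) := by exact_mod_cast Int.emod_lt_of_pos a hb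
  rw [Int.floor_eq_iff]
  constructor
  · rw [le_div_iff₀ hb']
    nlinarith
  · rw [div_lt_iff₀ hb']
    nlinarith

private lemma pop_fract_intCast_div (a b : ℤ) (hb : 0 < b) :
    Int.fract ((a : ℝ) / (b : ℝ)) = ((a % b : ℤ) : ℝ) / (b : ℝ) := by
  have hb' : ((b:ℝ)) ≠ 0 := by exact_mod_cast hb.ne'
  rw [Int.fract, pop_floor_intCast_div a b hb, Int.emod_def]
  push_cast
  field_simp
  try ring

private lemma pop_modeq_zmod {m a b : ℤ} (hm : 0 < m) (h : a ≡ b [ZMOD m]) :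
    (a : ZMod m.toNat) = (b : ZMod m.toNat) := by
  rw [ZMod.intCast_eq_intCast_iff]
  rwa [Int.toNat_of_nonneg hm.le]

private lemma pop_zmod_dvd {m a : ℤ} (hm : 0 < m) (h : (a : ZMod m.toNat) = 0) : m ∣ a := by
  have := (ZMod.intCast_zmod_eq_zero_iff_dvd a m.toNat).mp h
  rwa [Int.toNat_of_nonneg hm.le] at this

private lemma pop_dvd_zmod {m a : ℤ} (hm : 0 < m) (h : m ∣ a) : (a : ZMod m.toNat) = 0 := by
  rw [ZMod.intCast_zmod_eq_zero_iff_dvd, Int.toNat_of_nonneg hm.le]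
  exact h

private lemma pop_zmod_emod (m a : ℤ) (hm : 0 < m) :
    ((a % m : ℤ) : ZMod m.toNat) = (a : ZMod m.toNat) :=
  pop_modeq_zmod hm (Int.emod_emod_of_dvd a dvd_rfl)

private lemma pop_crt_eq_zero {m n u : ℤ} (hm : 0 < m) (hn : 0 < n) (hco : IsCoprime m n)
    (h1 : m ∣ u) (h2 : n ∣ u) (hlb : -(m*n) < u) (hub : u < m*n) : u = 0 := by
  obtain ⟨c, rfl⟩ := hco.mul_dvd h1 h2
  have hmn : 0 < m * n := mul_pos hm hn
  rcases lt_trichotomy c 0 with hc | hc | hc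
  · have : c ≤ -1 := by omega
    nlinarith
  · rw [hc, mul_zero]
  · have : 1 ≤ c := by omega
    nlinarith

set_option maxHeartbeats 1000000 in
/-- Generalized Popoviciu formula on the second fundamental cone, when the
minors `Y₁₂, Y₁₃, Y₂₃` are pairwise coprime. -/
theorem generalized_popoviciu_cone2
    (x1 y1 x2 y2 x3 y3 : ℤ)
    (hx1 : 0 < x1) (hx2 : 0 < x2) (hx3 : 0 < x3)
    (h12 : y1 * x2 < y2 * x1) (h23 : y2 * x3 < y3 * x2)
    (Y12 Y13 Y23 : ℤ)
    (hY12 : Y12 = x1 * y2 - y1 * x2)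
    (hY13 : Y13 = x1 * y3 - y1 * x3)
    (hY23 : Y23 = x2 * y3 - y2 * x3)
    (hc1 : IsCoprime Y12 Y13) (hc2 : IsCoprime Y12 Y23) (hc3 : IsCoprime Y13 Y23)
    (Y13inv Y23inv : ℤ)
    (hY13inv : Y13inv * Y13 ≡ 1 [ZMOD Y23])
    (hY23inv : Y23inv * Y23 ≡ 1 [ZMOD Y13])
    (n1 n2 : ℤ)
    (hcone : ∃ l1 l2 : ℝ, 0 ≤ l1 ∧ 0 ≤ l2 ∧
      (n1 : ℝ) = l1 * x2 + l2 * x3 ∧ (n2 : ℝ) = l1 * y2 + l2 * y3) :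
    (Nat.card {v : Fin 3 → ℕ //
        (v 0 : ℤ) * x1 + (v 1 : ℤ) * x2 + (v 2 : ℤ) * x3 = n1 ∧
        (v 0 : ℤ) * y1 + (v 1 : ℤ) * y2 + (v 2 : ℤ) * y3 = n2} : ℝ)
      = ((n1 * y3 - n2 * x3 : ℤ) : ℝ) / ((Y23 * Y13 : ℤ) : ℝ)
        - Int.fract (((Y13inv * (n1 * y3 - n2 * x3) : ℤ) : ℝ) / (Y23 : ℝ))
        - Int.fract (((Y23inv * (n1 * y3 - n2 * x3) : ℤ) : ℝ) / (Y13 : ℝ)) + 1 := by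
  obtain ⟨l1, l2, hl1, hl2, he1, he2⟩ := hcone
  -- positivity of minors
  have hY12pos : 0 < Y12 := by rw [hY12]; nlinarith
  have hY23pos : 0 < Y23 := by rw [hY23]; nlinarith
  have hY13pos : 0 < Y13 := by
    have key : x2 * (y1 * x3) < x2 * (y3 * x1) := by nlinarith
    have h13 : y1 * x3 < y3 * x1 := lt_of_mul_lt_mul_left key hx2.le
    rw [hY13]; linarith
  set N : ℤ := n1 * y3 - n2 * x3 with hNdef
  set M : ℤ := n1 * y2 - n2 * x2 with hMdef
  have hY23R : (Y23 : ℝ) = (x2:ℝ) * y3 - (y2:ℝ) * x3 := by rw [hY23]; push_cast; ring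
  have hNnonneg : 0 ≤ N := by
    have hNR : (N : ℝ) = l1 * Y23 := by
      push_cast [hNdef]
      linear_combination (y3:ℝ) * he1 - (x3:ℝ) * he2 - l1 * hY23R
    have : (0:ℝ) ≤ (N:ℝ) := by
      rw [hNR]
      have : (0:ℝ) < (Y23:ℝ) := by exact_mod_cast hY23pos
      positivity
    exact_mod_cast this
  have hMnonpos : M ≤ 0 := by
    have hMR : (M : ℝ) = -(l2 * Y23) := by
      push_cast [hMdef]
      linear_combination (y2:ℝ) * he1 - (x2:ℝ) * he2 + l2 * hY23R
    have h0 : (0:ℝ) < (Y23:ℝ) := by exact_mod_cast hY23pos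
    have : (M:ℝ) ≤ 0 := by rw [hMR]; nlinarith
    exact_mod_cast this
  -- ring identities between the minors
  have id1 : x2 * Y13 - x3 * Y12 = x1 * Y23 := by rw [hY12, hY13, hY23]; ring
  have id2 : y2 * Y13 - y3 * Y12 = y1 * Y23 := by rw [hY12, hY13, hY23]; ring
  have id3 : x2 * N - x3 * M = n1 * Y23 := by rw [hNdef, hMdef, hY23]; ring
  have id4 : y2 * N - y3 * M = n2 * Y23 := by rw [hNdef, hMdef, hY23]; ring
  have id5 : M * Y13 - N * Y12 = (n1 * y1 - n2 * x1) * Y23 := by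
    rw [hNdef, hMdef, hY12, hY13, hY23]; ring
  set r0 : ℤ := (Y13inv * N) % Y23 with hr0def
  set s0 : ℤ := (Y23inv * N) % Y13 with hs0def
  set Q : ℤ := N / Y13 with hQdef
  set D : ℤ := (Q - r0) / Y23 with hDdef
  have hr0nn : 0 ≤ r0 := Int.emod_nonneg _ hY23pos.ne'
  have hr0lt : r0 < Y23 := Int.emod_lt_of_pos _ hY23pos
  have hs0nn : 0 ≤ s0 := Int.emod_nonneg _ hY13pos.ne'
  have hs0lt : s0 < Y13 := Int.emod_lt_of_pos _ hY13pos
  have hQnn : 0 ≤ Q := Int.ediv_nonneg hNnonneg hY13pos.le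
  have hQN := Int.mul_ediv_add_emod N Y13
  have hQNr : 0 ≤ N % Y13 := Int.emod_nonneg _ hY13pos.ne'
  have hQNlt : N % Y13 < Y13 := Int.emod_lt_of_pos _ hY13pos
  have hDe := Int.mul_ediv_add_emod (Q - r0) Y23
  have hDer : 0 ≤ (Q - r0) % Y23 := Int.emod_nonneg _ hY23pos.ne'
  have hDelt : (Q - r0) % Y23 < Y23 := Int.emod_lt_of_pos _ hY23pos
  have hDge : -1 ≤ D := by
    rw [hDdef, Int.le_ediv_iff_mul_le hY23pos]
    linarith
  -- ZMod facts mod Y23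
  have z1 : ((Y13inv * Y13 : ℤ) : ZMod Y23.toNat) = ((1:ℤ) : ZMod Y23.toNat) :=
    pop_modeq_zmod hY23pos hY13inv
  have zr0 : ((r0 : ℤ) : ZMod Y23.toNat) = ((Y13inv * N : ℤ) : ZMod Y23.toNat) := by
    rw [hr0def]; exact pop_zmod_emod _ _ hY23pos
  -- Y23 ∣ N - r0 * Y13
  have hNr0 : Y23 ∣ N - r0 * Y13 := by
    apply pop_zmod_dvd hY23pos
    push_cast at z1 zr0 ⊢
    linear_combination (-(Y13 : ZMod Y23.toNat)) * zr0 - (N : ZMod Y23.toNat) * z1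
  -- the parametrization
  set A : ℕ → ℤ := fun k => r0 + (k : ℤ) * Y23 with hAdef
  set B : ℕ → ℤ := fun k => (N - A k * Y13) / Y23 with hBdef
  set C : ℕ → ℤ := fun k => (A k * Y12 - M) / Y23 with hCdef
  set cnt : ℕ := (D + 1).toNat with hcntdef
  have hA_nn : ∀ k : ℕ, 0 ≤ A k := fun k =>
    add_nonneg hr0nn (mul_nonneg (Int.natCast_nonneg k) hY23pos.le)
  have hA_le : ∀ k : ℕ, k < cnt → A k * Y13 ≤ N := by
    intro k hk
    have hkD : (k : ℤ) ≤ D := by omega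
    have h1 : (k:ℤ) * Y23 ≤ D * Y23 := mul_le_mul_of_nonneg_right hkD hY23pos.le
    have hAQ : A k ≤ Q := by rw [hAdef]; simp only; linarith
    have := mul_le_mul_of_nonneg_right hAQ hY13pos.le
    linarith
  have hdvdB : ∀ k : ℕ, Y23 ∣ N - A k * Y13 := by
    intro k
    have : N - A k * Y13 = (N - r0 * Y13) - Y23 * ((k:ℤ) * Y13) := by rw [hAdef]; ring
    rw [this]
    exact dvd_sub hNr0 (Dvd.intro _ rfl)
  have hB_eq : ∀ k : ℕ, Y23 * B k = N - A k * Y13 := fun k =>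
    Int.mul_ediv_cancel' (hdvdB k)
  have hB_nn : ∀ k : ℕ, k < cnt → 0 ≤ B k := by
    intro k hk
    exact Int.ediv_nonneg (by linarith [hA_le k hk]) hY23pos.le
  have hdvdC : ∀ k : ℕ, Y23 ∣ A k * Y12 - M := by
    intro k
    apply (hc3.symm).dvd_of_dvd_mul_left
    have hi : Y13 * (A k * Y12 - M) = Y12 * (A k * Y13 - N) - ((n1 * y1 - n2 * x1)) * Y23 := by
      linear_combination -id5
    rw [hi]
    have h' : Y23 ∣ A k * Y13 - N := by
      rw [show A k * Y13 - N = -(N - A k * Y13) by ring]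
      exact dvd_neg.mpr (hdvdB k)
    exact dvd_sub (h'.mul_left Y12) (dvd_mul_left Y23 _)
  have hC_eq : ∀ k : ℕ, Y23 * C k = A k * Y12 - M := fun k =>
    Int.mul_ediv_cancel' (hdvdC k)
  have hC_nn : ∀ k : ℕ, 0 ≤ C k := by
    intro k
    have : 0 ≤ A k * Y12 := mul_nonneg (hA_nn k) hY12pos.le
    exact Int.ediv_nonneg (by linarith) hY23pos.le
  -- the map
  set S := {v : Fin 3 → ℕ //
        (v 0 : ℤ) * x1 + (v 1 : ℤ) * x2 + (v 2 : ℤ) * x3 = n1 ∧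
        (v 0 : ℤ) * y1 + (v 1 : ℤ) * y2 + (v 2 : ℤ) * y3 = n2} with hSdef
  have hmem : ∀ k : Fin cnt,
      ((![(A k).toNat, (B k).toNat, (C k).toNat] : Fin 3 → ℕ) 0 : ℤ) * x1 +
        ((![(A k).toNat, (B k).toNat, (C k).toNat] : Fin 3 → ℕ) 1 : ℤ) * x2 +
        ((![(A k).toNat, (B k).toNat, (C k).toNat] : Fin 3 → ℕ) 2 : ℤ) * x3 = n1 ∧
      ((![(A k).toNat, (B k).toNat, (C k).toNat] : Fin 3 → ℕ) 0 : ℤ) * y1 +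
        ((![(A k).toNat, (B k).toNat, (C k).toNat] : Fin 3 → ℕ) 1 : ℤ) * y2 +
        ((![(A k).toNat, (B k).toNat, (C k).toNat] : Fin 3 → ℕ) 2 : ℤ) * y3 = n2 := by
    intro ⟨k, hk⟩
    simp only [Matrix.cons_val_zero, Matrix.cons_val_one, Matrix.head_cons,
      Matrix.cons_val_two, Matrix.tail_cons]
    rw [Int.toNat_of_nonneg (hA_nn k), Int.toNat_of_nonneg (hB_nn k hk),
      Int.toNat_of_nonneg (hC_nn k)]
    have hYne : Y23 ≠ 0 := hY23pos.ne'
    constructor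
    · apply mul_left_cancel₀ hYne
      linear_combination x2 * hB_eq k + x3 * hC_eq k - A k * id1 + id3
    · apply mul_left_cancel₀ hYne
      linear_combination y2 * hB_eq k + y3 * hC_eq k - A k * id2 + id4
  set g : Fin cnt → S := fun k => ⟨![(A k).toNat, (B k).toNat, (C k).toNat], hmem k⟩ with hgdef
  have hginj : Function.Injective g := by
    intro k1 k2 hgk
    have h0 : (A k1).toNat = (A k2).toNat := by
      have := congrArg (fun (v : S) => (v : Fin 3 → ℕ) 0) hgk
      simpa [hgdef] using this
    have hA12 : A (k1 : ℕ) = A (k2 : ℕ) := by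
      have e1 := Int.toNat_of_nonneg (hA_nn k1)
      have e2 := Int.toNat_of_nonneg (hA_nn k2)
      omega
    have : ((k1 : ℕ) : ℤ) * Y23 = ((k2 : ℕ) : ℤ) * Y23 := by
      have := hA12
      rw [hAdef] at this
      simp only at this
      linarith
    have : ((k1 : ℕ) : ℤ) = ((k2 : ℕ) : ℤ) := mul_right_cancel₀ hY23pos.ne' this
    have : (k1 : ℕ) = (k2 : ℕ) := by exact_mod_cast this
    exact Fin.ext this
  have hgsurj : Function.Surjective g := by
    rintro ⟨w, hw1, hw2⟩
    set a : ℤ := (w 0 : ℤ) with hadef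
    have ha_nn : 0 ≤ a := Int.natCast_nonneg _
    have hb' : (w 1 : ℤ) * Y23 = N - a * Y13 := by
      linear_combination (y3:ℤ) * hw1 - (x3:ℤ) * hw2 + (w 1 : ℤ) * hY23 + a * hY13 - hNdef
    have hc' : (w 2 : ℤ) * Y23 = a * Y12 - M := by
      linear_combination -(y2:ℤ) * hw1 + (x2:ℤ) * hw2 + (w 2 : ℤ) * hY23 - a * hY12 + hMdef
    have haY13 : a * Y13 ≤ N := by
      have h0 : (0:ℤ) ≤ (w 1 : ℤ) * Y23 := mul_nonneg (Int.natCast_nonneg _) hY23pos.le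
      linarith
    have hdvda : Y23 ∣ N - a * Y13 := ⟨(w 1 : ℤ), by linarith [hb']⟩
    -- a ≡ r0 mod Y23
    have hza : ((a : ℤ) : ZMod Y23.toNat) = ((r0 : ℤ) : ZMod Y23.toNat) := by
      have h0 : ((N - a * Y13 : ℤ) : ZMod Y23.toNat) = 0 := pop_dvd_zmod hY23pos hdvda
      push_cast at h0 z1 zr0 ⊢
      linear_combination -zr0 - (Y13inv : ZMod Y23.toNat) * h0 - (a : ZMod Y23.toNat) * z1
    have hmod : a ≡ r0 [ZMOD Y23] := by
      have := (ZMod.intCast_eq_intCast_iff _ _ _).mp hza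
      rwa [Int.toNat_of_nonneg hY23pos.le] at this
    obtain ⟨t, ht⟩ : Y23 ∣ a - r0 := (Int.ModEq.dvd hmod.symm)
    have ht0 : 0 ≤ t := by
      by_contra hcon
      push_neg at hcon
      have h1 : t ≤ -1 := by omega
      have h2 : Y23 * t ≤ Y23 * (-1) := mul_le_mul_of_nonneg_left h1 hY23pos.le
      linarith
    have haQ : a ≤ Q := by
      rw [hQdef]
      exact (Int.le_ediv_iff_mul_le hY13pos).mpr haY13
    have htD : t ≤ D := by
      rw [hDdef]
      apply (Int.le_ediv_iff_mul_le hY23pos).mpr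
      linarith
    have htcnt : t.toNat < cnt := by omega
    refine ⟨⟨t.toNat, htcnt⟩, ?_⟩
    have hAt : A t.toNat = a := by
      rw [hAdef]
      simp only
      rw [Int.toNat_of_nonneg ht0]
      linarith [ht]
    have hBt : B t.toNat = (w 1 : ℤ) := by
      rw [hBdef]
      simp only
      rw [hAt, show N - a * Y13 = (w 1 : ℤ) * Y23 by linarith [hb']]
      exact Int.mul_ediv_cancel _ hY23pos.ne'
    have hCt : C t.toNat = (w 2 : ℤ) := by
      rw [hCdef]
      simp only
      rw [hAt, show a * Y12 - M = (w 2 : ℤ) * Y23 by linarith [hc']]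
      exact Int.mul_ediv_cancel _ hY23pos.ne'
    have hA' : (A t.toNat).toNat = w 0 := by rw [hAt, hadef]; simp
    have hB' : (B t.toNat).toNat = w 1 := by rw [hBt]; simp
    have hC' : (C t.toNat).toNat = w 2 := by rw [hCt]; simp
    apply Subtype.ext
    show ![(A t.toNat).toNat, (B t.toNat).toNat, (C t.toNat).toNat] = w
    funext i
    fin_cases i
    · simpa using hA'
    · simpa using hB'
    · simpa using hC'
  have hcard : Nat.card S = cnt := by
    rw [← Nat.card_eq_of_bijective g ⟨hginj, hgsurj⟩, Nat.card_eq_fintype_card,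
      Fintype.card_fin]
  -- the key integer identity
  have hkey : D * (Y13 * Y23) = N - r0 * Y13 - s0 * Y23 := by
    set e : ℤ := (Q - r0) % Y23 with hedef
    set rh : ℤ := N % Y13 with hrhdef
    have h3 : s0 * Y23 = rh + e * Y13 := by
      set u : ℤ := s0 * Y23 - rh - e * Y13 with hudef
      have hu0 : u = 0 := by
        apply pop_crt_eq_zero hY13pos hY23pos hc3
        · apply pop_zmod_dvd hY13pos
          have zs0 : ((s0 : ℤ) : ZMod Y13.toNat) = ((Y23inv * N : ℤ) : ZMod Y13.toNat) := by
            rw [hs0def]; exact pop_zmod_emod _ _ hY13pos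
          have zrh : ((rh : ℤ) : ZMod Y13.toNat) = ((N : ℤ) : ZMod Y13.toNat) := by
            rw [hrhdef]; exact pop_zmod_emod _ _ hY13pos
          have z2 : ((Y23inv * Y23 : ℤ) : ZMod Y13.toNat) = ((1:ℤ) : ZMod Y13.toNat) :=
            pop_modeq_zmod hY13pos hY23inv
          have z13 : ((Y13 : ℤ) : ZMod Y13.toNat) = 0 := pop_dvd_zmod hY13pos dvd_rfl
          rw [hudef]
          push_cast at zs0 zrh z2 z13 ⊢
          linear_combination (Y23 : ZMod Y13.toNat) * zs0 - zrh - (e : ZMod Y13.toNat) * z13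
            + (N : ZMod Y13.toNat) * z2
        · apply pop_zmod_dvd hY23pos
          have ze : ((e : ℤ) : ZMod Y23.toNat) = ((Q - r0 : ℤ) : ZMod Y23.toNat) := by
            rw [hedef]; exact pop_zmod_emod _ _ hY23pos
          have z23 : ((Y23 : ℤ) : ZMod Y23.toNat) = 0 := pop_dvd_zmod hY23pos dvd_rfl
          have zh2 : ((Y13 * Q + rh : ℤ) : ZMod Y23.toNat) = ((N : ℤ) : ZMod Y23.toNat) := by
            rw [hrhdef]
            exact_mod_cast congrArg (fun z : ℤ => ((z : ZMod Y23.toNat))) hQN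
          rw [hudef]
          push_cast at ze z23 zh2 zr0 z1 ⊢
          linear_combination (s0 : ZMod Y23.toNat) * z23 - zh2 - (Y13 : ZMod Y23.toNat) * ze
            + (Y13 : ZMod Y23.toNat) * zr0 + (N : ZMod Y23.toNat) * z1
        · rw [hudef]
          have hb1 : e * Y13 ≤ (Y23 - 1) * Y13 :=
            mul_le_mul_of_nonneg_right (by linarith) hY13pos.le
          have hb2 : 0 ≤ s0 * Y23 := mul_nonneg hs0nn hY23pos.le
          linarith
        · rw [hudef]
          have hb3 : s0 * Y23 ≤ (Y13 - 1) * Y23 :=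
            mul_le_mul_of_nonneg_right (by linarith) hY23pos.le
          have hb4 : 0 ≤ e * Y13 := mul_nonneg (by linarith) hY13pos.le
          linarith
      rw [hudef] at hu0
      linarith
    linear_combination Y13 * hDe + hQN + h3
  -- put everything together over ℝ
  have hY13R : (0:ℝ) < (Y13:ℝ) := by exact_mod_cast hY13pos
  have hY23Rpos : (0:ℝ) < (Y23:ℝ) := by exact_mod_cast hY23pos
  rw [hcard]
  rw [pop_fract_intCast_div _ _ hY23pos, pop_fract_intCast_div _ _ hY13pos]
  have hcntR : ((cnt : ℕ) : ℝ) = (D : ℝ) + 1 := by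
    have h01 : (0:ℤ) ≤ D + 1 := by linarith
    rw [hcntdef]
    rw [show (((D + 1).toNat : ℕ) : ℝ) = ((((D + 1).toNat : ℕ) : ℤ) : ℝ) by push_cast; ring,
      Int.toNat_of_nonneg h01]
    push_cast
    ring
  rw [hcntR]
  have hkeyR : (D : ℝ) * ((Y13:ℝ) * (Y23:ℝ)) = (N:ℝ) - (r0:ℝ) * Y13 - (s0:ℝ) * Y23 := by
    exact_mod_cast congrArg (fun z : ℤ => (z : ℝ)) hkey
  have hr0R : (((Y13inv * N) % Y23 : ℤ) : ℝ) = (r0 : ℝ) := by rw [hr0def]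
  have hs0R : (((Y23inv * N) % Y13 : ℤ) : ℝ) = (s0 : ℝ) := by rw [hs0def]
  have h23ne : (Y23:ℝ) ≠ 0 := hY23Rpos.ne'
  have h13ne : (Y13:ℝ) ≠ 0 := hY13R.ne'
  have expand : (N:ℝ)/((Y23:ℝ)*(Y13:ℝ)) = (D:ℝ) + (r0:ℝ)/(Y23:ℝ) + (s0:ℝ)/(Y13:ℝ) := by
    rw [show (N:ℝ) = (D:ℝ)*((Y13:ℝ)*(Y23:ℝ)) + (r0:ℝ)*(Y13:ℝ) + (s0:ℝ)*(Y23:ℝ) by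
      linarith [hkeyR]]
    field_simp
  push_cast
  push_cast at hr0R hs0R
  rw [hr0R, hs0R, expand]
  ring
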